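/- Consider the closed set Γ := {(z, λ) ∈ ℝ × ℝ | z ≥ 0 ∧ λ² ≤ z} (the graph of the mapping K(z) = [−√z, √z] for z ≥ 0, K(z) = ∅ for z < 0) and the set M := (−∞, 0]. Then: (i) the Bouligand tangent cone of Γ at (0, 0) equals [0, ∞) × ℝ; (ii) (M × ℝ) ∩ Γ = {(0, 0)}, so T_{(M × ℝ) ∩ Γ}(0, 0) = {(0, 0)}; (iii) T_{M × ℝ}(0, 0) ∩ T_Γ(0, 0) = {0} × ℝ; in particular, the tangent cone intersection rule fails at (0, 0), i.e., T_{(M × ℝ) ∩ Γ}(0, 0) is a proper subset of T_{M × ℝ}(0, 0) ∩ T_Γ(0, 0). -/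
import Mathlib


open Filter Metric Set Bornology
open scoped RealInnerProductSpace Topology Pointwise

noncomputable section

/-- The Bouligand tangent cone to `Ω` at `x`: `w` belongs to it iff there are `t k ↓ 0`
(positive) and `v k → w` with `x + t k • v k ∈ Ω` for all `k`. -/
def bouligandTangentCone {E : Type*} [NormedAddCommGroup E] [NormedSpace ℝ E]
    (Ω : Set E) (x : E) : Set E :=
  {w | ∃ (t : ℕ → ℝ) (v : ℕ → E), (∀ k, 0 < t k) ∧
    Tendsto t atTop (𝓝 0) ∧ Tendsto v atTop (𝓝 w) ∧ ∀ k, x + t k • v k ∈ Ω}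

/-- The regular (Fréchet) normal cone, defined as the polar of the Bouligand tangent cone. -/
def regNormalCone {E : Type*} [NormedAddCommGroup E] [InnerProductSpace ℝ E]
    (Ω : Set E) (x : E) : Set E :=
  {ζ | ∀ w ∈ bouligandTangentCone Ω x, ⟪ζ, w⟫ ≤ 0}

/-- The regular (Fréchet) normal cone for subsets of a product of inner product spaces,
using the natural pairing on the product. -/
def regNormalConeProd {E F : Type*} [NormedAddCommGroup E] [InnerProductSpace ℝ E]
    [NormedAddCommGroup F] [InnerProductSpace ℝ F]
    (Ω : Set (E × F)) (p : E × F) : Set (E × F) :=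
  {ζ | ∀ q ∈ bouligandTangentCone Ω p, ⟪ζ.1, q.1⟫ + ⟪ζ.2, q.2⟫ ≤ 0}

/-- The domain of a set-valued mapping: the points with nonempty image. -/
def svDom {E F : Type*} (K : E → Set F) : Set E := {z | (K z).Nonempty}

/-- The graph of a set-valued mapping. -/
def svGraph {E F : Type*} (K : E → Set F) : Set (E × F) := {p | p.2 ∈ K p.1}

/-- `K` is inner semicompact at `zb` w.r.t. its domain: for every sequence in `dom K`
converging to `zb` there is a selection of images possessing a bounded subsequence. -/
def InnerSemicompactAt {E F : Type*} [TopologicalSpace E] [Bornology F]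
    (K : E → Set F) (zb : E) : Prop :=
  ∀ zs : ℕ → E, (∀ k, zs k ∈ svDom K) → Tendsto zs atTop (𝓝 zb) →
    ∃ ls : ℕ → F, (∀ k, ls k ∈ K (zs k)) ∧
      ∃ φ : ℕ → ℕ, StrictMono φ ∧ IsBounded (Set.range (ls ∘ φ))

/-- `K` is inner calm* in the fuzzy sense at `zb` w.r.t. its domain. -/
def InnerCalmStarFuzzyAt {E F : Type*} [NormedAddCommGroup E] [NormedSpace ℝ E]
    [NormedAddCommGroup F] (K : E → Set F) (zb : E) : Prop :=
  ∀ d ∈ bouligandTangentCone (svDom K) zb, ‖d‖ = 1 →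
    ∃ κ > (0 : ℝ), ∃ lb : F, ∃ (t : ℕ → ℝ) (ds : ℕ → E) (ls : ℕ → F),
      (∀ k, 0 < t k) ∧ Tendsto t atTop (𝓝 0) ∧ Tendsto ds atTop (𝓝 d) ∧
      Tendsto ls atTop (𝓝 lb) ∧
      ∀ k, ls k ∈ K (zb + t k • ds k) ∧ ‖ls k - lb‖ ≤ κ * t k * ‖ds k‖


private lemma seq_pos : ∀ k : ℕ, (0:ℝ) < 1/(k+1) := fun k => by positivity

private lemma seq_tendsto : Tendsto (fun k : ℕ => 1/((k:ℝ)+1)) atTop (𝓝 0) :=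
  tendsto_one_div_add_atTop_nhds_zero_nat

/-- First component nonnegativity lower bound for tangent vectors. -/
private lemma fst_nonneg_of_tc {S : Set (ℝ × ℝ)} (hS : ∀ p ∈ S, 0 ≤ p.1)
    {w : ℝ × ℝ} (hw : w ∈ bouligandTangentCone S ((0:ℝ),(0:ℝ))) : 0 ≤ w.1 := by
  obtain ⟨t, v, htpos, ht0, hv, hmem⟩ := hw
  have h1 : ∀ k, 0 ≤ (v k).1 := by
    intro k
    have := hS _ (hmem k)
    simp only [Prod.fst_add, Prod.smul_fst, smul_eq_mul] at this
    nlinarith [htpos k]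
  have hvf : Tendsto (fun k => (v k).1) atTop (𝓝 w.1) :=
    (continuous_fst.tendsto w).comp hv
  exact ge_of_tendsto' hvf h1

private lemma fst_nonpos_of_tc {S : Set (ℝ × ℝ)} (hS : ∀ p ∈ S, p.1 ≤ 0)
    {w : ℝ × ℝ} (hw : w ∈ bouligandTangentCone S ((0:ℝ),(0:ℝ))) : w.1 ≤ 0 := by
  obtain ⟨t, v, htpos, ht0, hv, hmem⟩ := hw
  have h1 : ∀ k, (v k).1 ≤ 0 := by
    intro k
    have := hS _ (hmem k)
    simp only [Prod.fst_add, Prod.smul_fst, smul_eq_mul] at this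
    nlinarith [htpos k]
  have hvf : Tendsto (fun k => (v k).1) atTop (𝓝 w.1) :=
    (continuous_fst.tendsto w).comp hv
  exact le_of_tendsto' hvf h1

/-- Failure of the tangent cone intersection rule for `M = (-∞, 0]` and the graph
`Γ = {(z, λ) | z ≥ 0, λ² ≤ z}` at `(0, 0)`. -/
theorem stmt_17 :
    ∀ (Γ : Set (ℝ × ℝ)) (M : Set ℝ),
      Γ = {p | 0 ≤ p.1 ∧ p.2 ^ 2 ≤ p.1} →
      M = Set.Iic (0 : ℝ) →
      bouligandTangentCone Γ ((0 : ℝ), (0 : ℝ)) = Set.Ici (0 : ℝ) ×ˢ (univ : Set ℝ) ∧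
      (M ×ˢ (univ : Set ℝ)) ∩ Γ = {((0 : ℝ), (0 : ℝ))} ∧
      bouligandTangentCone ((M ×ˢ (univ : Set ℝ)) ∩ Γ) ((0 : ℝ), (0 : ℝ))
        = {((0 : ℝ), (0 : ℝ))} ∧
      bouligandTangentCone (M ×ˢ (univ : Set ℝ)) ((0 : ℝ), (0 : ℝ))
          ∩ bouligandTangentCone Γ ((0 : ℝ), (0 : ℝ))
        = ({0} : Set ℝ) ×ˢ (univ : Set ℝ) ∧
      bouligandTangentCone ((M ×ˢ (univ : Set ℝ)) ∩ Γ) ((0 : ℝ), (0 : ℝ))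
        ⊂ bouligandTangentCone (M ×ˢ (univ : Set ℝ)) ((0 : ℝ), (0 : ℝ))
            ∩ bouligandTangentCone Γ ((0 : ℝ), (0 : ℝ)) := by
  intro Γ M hΓ hM
  subst hΓ hM
  -- (i)
  have hT1 : bouligandTangentCone {p : ℝ × ℝ | 0 ≤ p.1 ∧ p.2 ^ 2 ≤ p.1} ((0:ℝ),(0:ℝ))
      = Set.Ici (0:ℝ) ×ˢ (univ : Set ℝ) := by
    ext ⟨a, b⟩
    simp only [Set.mem_prod, Set.mem_Ici, Set.mem_univ, and_true]
    constructor
    · intro hw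
      exact fst_nonneg_of_tc (fun p hp => hp.1) hw
    · intro ha
      refine ⟨fun k => 1/((k:ℝ)+1), fun k => (a + (1/((k:ℝ)+1)) * b^2, b),
        seq_pos, seq_tendsto, ?_, ?_⟩
      · have h1 : Tendsto (fun k : ℕ => a + (1/((k:ℝ)+1)) * b^2) atTop (𝓝 a) := by
          have := seq_tendsto.mul_const (b^2)
          simpa using tendsto_const_nhds.add this
        exact h1.prodMk_nhds tendsto_const_nhds
      · intro k
        have hk := seq_pos k
        constructor
        · simp only [Prod.fst_add, Prod.smul_fst, smul_eq_mul]
          nlinarith [mul_nonneg hk.le ha, mul_nonneg (mul_nonneg hk.le hk.le) (sq_nonneg b)]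
        · simp only [Prod.fst_add, Prod.snd_add, Prod.smul_fst, Prod.smul_snd, smul_eq_mul]
          nlinarith [mul_nonneg hk.le ha]
  -- (ii)
  have hInt : (Set.Iic (0:ℝ) ×ˢ (univ : Set ℝ)) ∩ {p : ℝ × ℝ | 0 ≤ p.1 ∧ p.2 ^ 2 ≤ p.1}
      = {((0:ℝ),(0:ℝ))} := by
    ext ⟨z, l⟩
    simp only [Set.mem_inter_iff, Set.mem_prod, Set.mem_Iic, Set.mem_univ, and_true,
      Set.mem_setOf_eq, Set.mem_singleton_iff, Prod.mk.injEq, Prod.ext_iff]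
    constructor
    · rintro ⟨h1, h2, h3⟩
      constructor
      · linarith
      · nlinarith
    · rintro ⟨rfl, rfl⟩
      norm_num
  -- (iii) tangent cone of singleton
  have hT2 : bouligandTangentCone ((Set.Iic (0:ℝ) ×ˢ (univ : Set ℝ))
      ∩ {p : ℝ × ℝ | 0 ≤ p.1 ∧ p.2 ^ 2 ≤ p.1}) ((0:ℝ),(0:ℝ)) = {((0:ℝ),(0:ℝ))} := by
    rw [hInt]
    ext w
    simp only [Set.mem_singleton_iff]
    constructor
    · rintro ⟨t, v, htpos, ht0, hv, hmem⟩
      have hv0 : ∀ k, v k = ((0:ℝ),(0:ℝ)) := by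
        intro k
        have h := hmem k
        simp only [Set.mem_singleton_iff, Prod.ext_iff, Prod.fst_add, Prod.snd_add,
          Prod.smul_fst, Prod.smul_snd, smul_eq_mul, zero_add] at h
        have hne := (htpos k).ne'
        have h1 : (v k).1 = 0 := by
          rcases mul_eq_zero.mp h.1 with h' | h'
          · exact absurd h' hne
          · exact h'
        have h2 : (v k).2 = 0 := by
          rcases mul_eq_zero.mp h.2 with h' | h'
          · exact absurd h' hne
          · exact h'
        exact Prod.ext h1 h2
      have : Tendsto (fun _ : ℕ => ((0:ℝ),(0:ℝ))) atTop (𝓝 w) := by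
        simpa [funext hv0] using hv
      exact (tendsto_nhds_unique tendsto_const_nhds this).symm
    · rintro rfl
      exact ⟨fun k => 1/((k:ℝ)+1), fun _ => ((0:ℝ),(0:ℝ)), seq_pos, seq_tendsto,
        tendsto_const_nhds, fun k => by simp⟩
  -- (iv)
  have hTM : ∀ b : ℝ, ((0:ℝ), b) ∈ bouligandTangentCone (Set.Iic (0:ℝ) ×ˢ (univ : Set ℝ))
      ((0:ℝ),(0:ℝ)) := by
    intro b
    exact ⟨fun k => 1/((k:ℝ)+1), fun _ => ((0:ℝ), b), seq_pos, seq_tendsto,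
      tendsto_const_nhds, fun k => by
        constructor
        · simp only [Prod.fst_add, Prod.smul_fst, smul_eq_mul]
          simp
        · exact Set.mem_univ _⟩
  have hT3 : bouligandTangentCone (Set.Iic (0:ℝ) ×ˢ (univ : Set ℝ)) ((0:ℝ),(0:ℝ))
      ∩ bouligandTangentCone {p : ℝ × ℝ | 0 ≤ p.1 ∧ p.2 ^ 2 ≤ p.1} ((0:ℝ),(0:ℝ))
      = ({0} : Set ℝ) ×ˢ (univ : Set ℝ) := by
    ext ⟨a, b⟩
    simp only [Set.mem_inter_iff, Set.mem_prod, Set.mem_singleton_iff, Set.mem_univ, and_true]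
    constructor
    · rintro ⟨h1, h2⟩
      have ha1 : a ≤ 0 := fst_nonpos_of_tc (fun p hp => hp.1) h1
      have ha2 : (0:ℝ) ≤ a := by
        have := hT1 ▸ h2
        simpa using this.1
      linarith
    · rintro rfl
      refine ⟨hTM b, ?_⟩
      rw [hT1]
      simp
  refine ⟨hT1, hInt, hT2, hT3, ?_⟩
  rw [hT2, hT3]
  constructor
  · rintro w rfl
    simp
  · intro h
    have : ((0:ℝ),(1:ℝ)) ∈ ({((0:ℝ),(0:ℝ))} : Set (ℝ × ℝ)) := h (by simp)
    simp [Prod.ext_iff] at this
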